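/- Fixed point implies stationarity (boundary case): let p ∈ (0,1), r > 0, β > 0, f differentiable, and x ∈ ℝⁿ with ‖x‖_p^p = r. Suppose x minimizes φ(y) = f(x) + ⟨∇f(x), y − x⟩ + (β/2)‖y − x‖² over the set {y : ∑_{i∈I(x)} |xᵢ|^(p-1)|yᵢ| ≤ r/p + ((p−1)/p)r_x, yᵢ = 0 for i ∈ A(x)} (where r_x = ‖x‖_p^p), i.e., x is a fixed point of subproblem (𝒫₁). Then there exists λ ≥ 0 such that ∇ᵢf(x) + λ p |xᵢ|^(p−1) sgn(xᵢ) = 0 for all i ∈ I(x). -/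

import Mathlib

open Finset

lemma nonpos_of_le_mul (a K δ : ℝ) (hδ : 0 < δ)
    (h : ∀ t : ℝ, 0 < t → t ≤ δ → a ≤ K * t) : a ≤ 0 := by
  by_contra hc
  push_neg at hc
  have hK'0 : (0:ℝ) < max K 1 := lt_of_lt_of_le one_pos (le_max_right _ _)
  have hε : 0 < a / (2 * max K 1) := by positivity
  have ht0 : 0 < min δ (a / (2 * max K 1)) := lt_min hδ hε
  have h1 := h _ ht0 (min_le_left _ _)
  have h2 : K * min δ (a / (2 * max K 1)) ≤ max K 1 * min δ (a / (2 * max K 1)) :=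
    mul_le_mul_of_nonneg_right (le_max_left _ _) ht0.le
  have h3 : max K 1 * min δ (a / (2 * max K 1)) ≤ max K 1 * (a / (2 * max K 1)) :=
    mul_le_mul_of_nonneg_left (min_le_right _ _) hK'0.le
  have h4 : max K 1 * (a / (2 * max K 1)) = a / 2 := by
    field_simp
  linarith

lemma abs_sub_sign (x₀ t : ℝ) (hx : x₀ ≠ 0) (ht : 0 ≤ t) (ht' : t ≤ |x₀|) :
    |x₀ - t * Real.sign x₀| = |x₀| - t := by
  rcases hx.lt_or_gt with h | h
  · rw [Real.sign_of_neg h, abs_of_neg h] at *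
    rw [abs_of_nonpos (by linarith)]
    ring
  · rw [Real.sign_of_pos h, abs_of_pos h] at *
    rw [abs_of_nonneg (by linarith)]
    ring

lemma abs_add_sign (x₀ s : ℝ) (hx : x₀ ≠ 0) (hs : 0 ≤ s) :
    |x₀ + s * Real.sign x₀| = |x₀| + s := by
  rcases hx.lt_or_gt with h | h
  · rw [Real.sign_of_neg h, abs_of_neg h] at *
    rw [abs_of_nonpos (by linarith)]
    ring
  · rw [Real.sign_of_pos h, abs_of_pos h] at *
    rw [abs_of_nonneg (by linarith)]
    ring

lemma sign_mul_self_sign (x₀ : ℝ) (hx : x₀ ≠ 0) : Real.sign x₀ * Real.sign x₀ = 1 := by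
  rcases hx.lt_or_gt with h | h
  · rw [Real.sign_of_neg h]; norm_num
  · rw [Real.sign_of_pos h]; norm_num

theorem fixed_point_stationary_boundary (n : ℕ) (p r β : ℝ)
    (hp0 : 0 < p) (hp1 : p < 1) (hr : 0 < r) (hβ : 0 < β)
    (f : EuclideanSpace ℝ (Fin n) → ℝ) (hf : Differentiable ℝ f)
    (x : EuclideanSpace ℝ (Fin n)) (hx : ∑ i, |x i| ^ p = r)
    (S : Set (EuclideanSpace ℝ (Fin n)))
    (hS : S = {y | (∑ i ∈ Finset.univ.filter (fun i => x i ≠ 0), |x i| ^ (p - 1) * |y i|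
        ≤ r / p + ((p - 1) / p) * r) ∧ ∀ i, x i = 0 → y i = 0})
    (hmin : ∀ y ∈ S,
      f x + (inner ℝ (gradient f x) (x - x) : ℝ) + β / 2 * ‖x - x‖ ^ 2 ≤
        f x + (inner ℝ (gradient f x) (y - x) : ℝ) + β / 2 * ‖y - x‖ ^ 2) :
    ∃ lam : ℝ, 0 ≤ lam ∧ ∀ i, x i ≠ 0 →
      gradient f x i + lam * p * |x i| ^ (p - 1) * Real.sign (x i) = 0 := by
  classical
  set g : EuclideanSpace ℝ (Fin n) := gradient f x with hg
  set I : Finset (Fin n) := Finset.univ.filter (fun i => x i ≠ 0) with hI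
  set a : Fin n → ℝ := fun k => |x k| ^ (p - 1) with ha
  -- basic facts
  have hbound : r / p + ((p - 1) / p) * r = r := by
    field_simp
    ring
  have haI : ∀ k, x k ≠ 0 → 0 < a k := by
    intro k hk
    exact Real.rpow_pos_of_pos (abs_pos.mpr hk) _
  have hax : ∀ k, x k ≠ 0 → a k * |x k| = |x k| ^ p := by
    intro k hk
    have h0 : (0:ℝ) < |x k| := abs_pos.mpr hk
    rw [ha]
    calc |x k| ^ (p - 1) * |x k| = |x k| ^ (p - 1) * |x k| ^ (1:ℝ) := by rw [Real.rpow_one]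
      _ = |x k| ^ (p - 1 + 1) := (Real.rpow_add h0 _ _).symm
      _ = |x k| ^ p := by norm_num
  have hxsum : ∑ k ∈ I, a k * |x k| = r := by
    rw [← hx]
    rw [Finset.sum_filter]
    apply Finset.sum_congr rfl
    intro k _
    by_cases hk : x k ≠ 0
    · rw [if_pos hk, hax k hk]
    · push_neg at hk
      rw [if_neg (by simpa using hk), hk]
      simp [Real.zero_rpow hp0.ne']
  -- minimality reformulated
  have hmin' : ∀ y : EuclideanSpace ℝ (Fin n),
      (∑ k ∈ I, a k * |y k| ≤ r) → (∀ k, x k = 0 → y k = 0) →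
      0 ≤ (inner ℝ g (y - x) : ℝ) + β / 2 * ‖y - x‖ ^ 2 := by
    intro y h1 h2
    have hyS : y ∈ S := by
      rw [hS]
      exact ⟨by rw [hbound]; exact h1, h2⟩
    have := hmin y hyS
    simp only [sub_self, inner_zero_right, norm_zero] at this
    linarith
  have hinner : ∀ z : EuclideanSpace ℝ (Fin n), (inner ℝ g z : ℝ) = ∑ k, g k * z k := by
    intro z
    simp [PiLp.inner_apply, RCLike.inner_apply, mul_comm]
  have hnorm : ∀ z : EuclideanSpace ℝ (Fin n), ‖z‖ ^ 2 = ∑ k, z k ^ 2 := by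
    intro z
    rw [EuclideanSpace.norm_eq, Real.sq_sqrt (by positivity)]
    simp [sq_abs]
  -- key two-coordinate perturbation lemma
  have key2 : ∀ i j : Fin n, i ≠ j → x i ≠ 0 → x j ≠ 0 → ∀ u v : ℝ,
      a i * |x i + u| + a j * |x j + v| ≤ a i * |x i| + a j * |x j| →
      0 ≤ u * g i + v * g j + β / 2 * (u ^ 2 + v ^ 2) := by
    intro i j hij hxi hxj u v hcon
    set y : EuclideanSpace ℝ (Fin n) :=
      x + u • EuclideanSpace.single i 1 + v • EuclideanSpace.single j 1 with hy
    have hyk : ∀ k, y k = x k + (if k = i then u else 0) + (if k = j then v else 0) := by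
      intro k
      simp [hy, EuclideanSpace.single_apply]
    have hyi : y i = x i + u := by rw [hyk]; simp [hij]
    have hyj : y j = x j + v := by rw [hyk]; simp [hij.symm]
    have hyo : ∀ k, k ≠ i → k ≠ j → y k = x k := by
      intro k h1 h2
      rw [hyk, if_neg h1, if_neg h2]; ring
    have hiI : i ∈ I := by simp [hI, hxi]
    have hjI : j ∈ I.erase i := by simp [hI, hxj, hij.symm]
    have hsplit : ∀ w : EuclideanSpace ℝ (Fin n),
        ∑ k ∈ I, a k * |w k| =
          a i * |w i| + (a j * |w j| + ∑ k ∈ (I.erase i).erase j, a k * |w k|) := by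
      intro w
      rw [← Finset.add_sum_erase I _ hiI, ← Finset.add_sum_erase (I.erase i) _ hjI]
    have hfeas : ∑ k ∈ I, a k * |y k| ≤ r := by
      rw [← hxsum, hsplit y, hsplit x, hyi, hyj]
      have htail : ∑ k ∈ (I.erase i).erase j, a k * |y k|
          = ∑ k ∈ (I.erase i).erase j, a k * |x k| := by
        apply Finset.sum_congr rfl
        intro k hk
        have hk1 : k ≠ j := Finset.ne_of_mem_erase hk
        have hk2 : k ≠ i := Finset.ne_of_mem_erase (Finset.mem_of_mem_erase hk)
        rw [hyo k hk2 hk1]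
      rw [htail]
      linarith
    have hz : ∀ k, x k = 0 → y k = 0 := by
      intro k hk
      have hki : k ≠ i := by rintro rfl; exact hxi hk
      have hkj : k ≠ j := by rintro rfl; exact hxj hk
      rw [hyo k hki hkj, hk]
    have h0 := hmin' y hfeas hz
    have hdk : ∀ k, (y - x) k = (if k = i then u else 0) + (if k = j then v else 0) := by
      intro k
      have : (y - x) k = y k - x k := rfl
      rw [this, hyk]; ring
    have hin : (inner ℝ g (y - x) : ℝ) = u * g i + v * g j := by
      rw [hinner]
      have : ∀ k, g k * (y - x) k
          = (if k = i then g i * u else 0) + (if k = j then g j * v else 0) := by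
        intro k
        rw [hdk]
        by_cases h1 : k = i
        · subst h1
          rw [if_pos rfl, if_pos rfl, if_neg hij, if_neg hij]
          ring
        · by_cases h2 : k = j
          · subst h2
            rw [if_neg h1, if_pos rfl, if_neg h1, if_pos rfl]
            ring
          · rw [if_neg h1, if_neg h2, if_neg h1, if_neg h2]
            ring
      rw [Finset.sum_congr rfl (fun k _ => this k), Finset.sum_add_distrib]
      rw [Finset.sum_ite_eq' Finset.univ i, Finset.sum_ite_eq' Finset.univ j]
      simp
      ring
    have hn : ‖y - x‖ ^ 2 = u ^ 2 + v ^ 2 := by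
      rw [hnorm]
      have : ∀ k, ((y - x) k) ^ 2
          = (if k = i then u ^ 2 else 0) + (if k = j then v ^ 2 else 0) := by
        intro k
        rw [hdk]
        by_cases h1 : k = i
        · subst h1
          rw [if_pos rfl, if_pos rfl, if_neg hij, if_neg hij]
          ring
        · by_cases h2 : k = j
          · subst h2
            rw [if_neg h1, if_pos rfl, if_neg h1, if_pos rfl]
            ring
          · rw [if_neg h1, if_neg h2, if_neg h1, if_neg h2]
            ring
      rw [Finset.sum_congr rfl (fun k _ => this k), Finset.sum_add_distrib]
      rw [Finset.sum_ite_eq' Finset.univ i, Finset.sum_ite_eq' Finset.univ j]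
      simp
    rw [hin, hn] at h0
    linarith
  -- key one-coordinate perturbation lemma
  have key1 : ∀ i : Fin n, x i ≠ 0 → ∀ u : ℝ, |x i + u| ≤ |x i| →
      0 ≤ u * g i + β / 2 * u ^ 2 := by
    intro i hxi u habs
    set y : EuclideanSpace ℝ (Fin n) := x + u • EuclideanSpace.single i 1 with hy
    have hyk : ∀ k, y k = x k + (if k = i then u else 0) := by
      intro k
      simp [hy, EuclideanSpace.single_apply]
    have hyi : y i = x i + u := by rw [hyk]; simp
    have hyo : ∀ k, k ≠ i → y k = x k := by
      intro k h1
      rw [hyk, if_neg h1]; ring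
    have hiI : i ∈ I := by simp [hI, hxi]
    have hsplit : ∀ w : EuclideanSpace ℝ (Fin n),
        ∑ k ∈ I, a k * |w k| = a i * |w i| + ∑ k ∈ I.erase i, a k * |w k| := by
      intro w
      rw [← Finset.add_sum_erase I _ hiI]
    have hfeas : ∑ k ∈ I, a k * |y k| ≤ r := by
      rw [← hxsum, hsplit y, hsplit x, hyi]
      have htail : ∑ k ∈ I.erase i, a k * |y k| = ∑ k ∈ I.erase i, a k * |x k| := by
        apply Finset.sum_congr rfl
        intro k hk
        rw [hyo k (Finset.ne_of_mem_erase hk)]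
      rw [htail]
      have : a i * |x i + u| ≤ a i * |x i| :=
        mul_le_mul_of_nonneg_left habs (haI i hxi).le
      linarith
    have hz : ∀ k, x k = 0 → y k = 0 := by
      intro k hk
      have hki : k ≠ i := by rintro rfl; exact hxi hk
      rw [hyo k hki, hk]
    have h0 := hmin' y hfeas hz
    have hdk : ∀ k, (y - x) k = if k = i then u else 0 := by
      intro k
      have : (y - x) k = y k - x k := rfl
      rw [this, hyk]; ring
    have hin : (inner ℝ g (y - x) : ℝ) = u * g i := by
      rw [hinner]
      have : ∀ k, g k * (y - x) k = if k = i then g i * u else 0 := by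
        intro k
        rw [hdk]
        by_cases h1 : k = i
        · subst h1
          rw [if_pos rfl, if_pos rfl]
        · rw [if_neg h1, if_neg h1]
          ring
      rw [Finset.sum_congr rfl (fun k _ => this k)]
      rw [Finset.sum_ite_eq' Finset.univ i]
      simp
      ring
    have hn : ‖y - x‖ ^ 2 = u ^ 2 := by
      rw [hnorm]
      have : ∀ k, ((y - x) k) ^ 2 = if k = i then u ^ 2 else 0 := by
        intro k
        rw [hdk]
        by_cases h1 : k = i
        · subst h1
          rw [if_pos rfl, if_pos rfl]
        · rw [if_neg h1, if_neg h1]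
          exact (zero_pow two_ne_zero)
      rw [Finset.sum_congr rfl (fun k _ => this k)]
      rw [Finset.sum_ite_eq' Finset.univ i]
      simp
    rw [hin, hn] at h0
    linarith
  -- step: sign(x i) * g i ≤ 0 for i in support
  have hsgn : ∀ i : Fin n, x i ≠ 0 → Real.sign (x i) * g i ≤ 0 := by
    intro i hxi
    have habs : 0 < |x i| := abs_pos.mpr hxi
    apply nonpos_of_le_mul _ (β / 2) (|x i|) habs
    intro t ht0 ht1
    have h := key1 i hxi (-(t * Real.sign (x i))) (by
      rw [← sub_eq_add_neg, abs_sub_sign (x i) t hxi ht0.le ht1]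
      linarith)
    have hs2 : Real.sign (x i) * Real.sign (x i) = 1 := sign_mul_self_sign _ hxi
    have e1 : (-(t * Real.sign (x i))) ^ 2 = t ^ 2 := by
      rw [show (-(t * Real.sign (x i))) ^ 2
          = t ^ 2 * (Real.sign (x i) * Real.sign (x i)) from by ring, hs2, mul_one]
    rw [e1] at h
    have h2 : (Real.sign (x i) * g i) * t ≤ (β / 2 * t) * t := by nlinarith [h]
    exact le_of_mul_le_mul_right h2 ht0
  -- step: proportionality across support
  have hprop : ∀ i j : Fin n, x i ≠ 0 → x j ≠ 0 →
      a j * (Real.sign (x i) * g i) = a i * (Real.sign (x j) * g j) := by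
    have hle : ∀ i j : Fin n, i ≠ j → x i ≠ 0 → x j ≠ 0 →
        a j * (Real.sign (x i) * g i) ≤ a i * (Real.sign (x j) * g j) := by
      intro i j hij hxi hxj
      have hai : 0 < a i := haI i hxi
      have haj : 0 < a j := haI j hxj
      have habs : 0 < |x i| := abs_pos.mpr hxi
      have hc : ∀ t : ℝ, 0 < t → t ≤ |x i| →
          Real.sign (x i) * g i - (a i / a j) * (Real.sign (x j) * g j) ≤
            (β / 2 * (1 + (a i / a j) ^ 2)) * t := by
        intro t ht0 ht1
        have hs0 : 0 ≤ (a i / a j) * t := by positivity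
        have h := key2 i j hij hxi hxj (-(t * Real.sign (x i)))
          (((a i / a j) * t) * Real.sign (x j)) (by
          rw [← sub_eq_add_neg, abs_sub_sign (x i) t hxi ht0.le ht1,
            abs_add_sign (x j) ((a i / a j) * t) hxj hs0]
          have hsub : a j * ((a i / a j) * t) = a i * t := by
            field_simp
          nlinarith [hsub])
        have hsi : Real.sign (x i) * Real.sign (x i) = 1 := sign_mul_self_sign _ hxi
        have hsj : Real.sign (x j) * Real.sign (x j) = 1 := sign_mul_self_sign _ hxj
        have e1 : (-(t * Real.sign (x i))) ^ 2 = t ^ 2 := by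
          rw [show (-(t * Real.sign (x i))) ^ 2
              = t ^ 2 * (Real.sign (x i) * Real.sign (x i)) from by ring, hsi, mul_one]
        have e2 : (((a i / a j) * t) * Real.sign (x j)) ^ 2 = ((a i / a j) * t) ^ 2 := by
          rw [show (((a i / a j) * t) * Real.sign (x j)) ^ 2
              = ((a i / a j) * t) ^ 2 * (Real.sign (x j) * Real.sign (x j)) from by ring,
            hsj, mul_one]
        rw [e1, e2] at h
        have h2 : (Real.sign (x i) * g i - (a i / a j) * (Real.sign (x j) * g j)) * t
            ≤ ((β / 2 * (1 + (a i / a j) ^ 2)) * t) * t := by nlinarith [h]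
        exact le_of_mul_le_mul_right h2 ht0
      have := nonpos_of_le_mul _ _ _ habs hc
      have h2 : a j * (Real.sign (x i) * g i) ≤ a j * ((a i / a j) * (Real.sign (x j) * g j)) := by
        apply mul_le_mul_of_nonneg_left _ haj.le
        linarith
      have h3 : a j * ((a i / a j) * (Real.sign (x j) * g j)) = a i * (Real.sign (x j) * g j) := by
        field_simp
      linarith [h2, h3.symm.le]
    intro i j hxi hxj
    rcases eq_or_ne i j with rfl | hij
    · rfl
    · exact le_antisymm (hle i j hij hxi hxj) (hle j i hij.symm hxj hxi)
  -- pick a base index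
  have hInonempty : ∃ i₀ : Fin n, x i₀ ≠ 0 := by
    by_contra hc
    push_neg at hc
    have : ∑ i, |x i| ^ p = 0 := by
      apply Finset.sum_eq_zero
      intro k _
      rw [hc k]
      simp [Real.zero_rpow hp0.ne']
    rw [hx] at this
    linarith
  obtain ⟨i₀, hi₀⟩ := hInonempty
  have hai₀ : 0 < a i₀ := haI i₀ hi₀
  refine ⟨-(Real.sign (x i₀) * g i₀) / (p * a i₀), ?_, ?_⟩
  · apply div_nonneg _ (by positivity)
    linarith [hsgn i₀ hi₀]
  · intro i hxi
    have hai : 0 < a i := haI i hxi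
    have hp := hprop i i₀ hxi hi₀
    have hsi : Real.sign (x i) * Real.sign (x i) = 1 := sign_mul_self_sign _ hxi
    have hap : |x i| ^ (p - 1) = a i := rfl
    show g i + -(Real.sign (x i₀) * g i₀) / (p * a i₀) * p * |x i| ^ (p - 1) * Real.sign (x i) = 0
    rw [hap]
    have hpa : p * a i₀ ≠ 0 := ne_of_gt (by positivity)
    field_simp
    linear_combination (Real.sign (x i)) * hp - (a i₀ * g i) * hsi
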